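/- Let |ψ'⟩ be a unit vector and let X'_u, Z'_u, X'_v, Z'_v and Z'_w (w in N_u ∪ N_v) be self-adjoint involutions acting on a tensor-product Hilbert space (operators indexed by distinct parties commute). Suppose S'_u|ψ'⟩ = S'_v|ψ'⟩ = |ψ'⟩ where S'_u = X'_u Z'^{N_u}, S'_v = X'_v Z'^{N_v}, and (u,v) is an edge. If X'_v Z'_v |ψ'⟩ = -Z'_v X'_v |ψ'⟩, then X'_u Z'_u |ψ'⟩ = -Z'_u X'_u |ψ'⟩. -/

import Mathlib

lemma noncommProd_sq_one {M : Type*} [Monoid M] {ι : Type*} (s : Finset ι) (f : ι → M) :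
    ∀ (hcomm : (↑s : Set ι).Pairwise (Function.onFun Commute f)), (∀ x ∈ s, f x * f x = 1) →
    s.noncommProd f hcomm * s.noncommProd f hcomm = 1 := by
  induction s using Finset.cons_induction with
  | empty => intro _ _; simp
  | cons a s ha ih =>
    intro hcomm h1
    rw [Finset.noncommProd_cons]
    set P := s.noncommProd f (hcomm.mono fun _ => Finset.mem_cons.2 ∘ .inr) with hP
    have hc : Commute P (f a) :=
      (Finset.noncommProd_commute _ _ _ _ (fun x hx =>
        hcomm.of_refl (Finset.mem_cons_self a s) (Finset.mem_cons_of_mem hx))).symm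
    calc f a * P * (f a * P) = f a * f a * (P * P) := hc.mul_mul_mul_comm (f a) P
      _ = 1 := by
        rw [h1 a (Finset.mem_cons_self a s), ih _ (fun x hx => h1 x (Finset.mem_cons_of_mem hx)),
          one_mul]


/-- Anticommutativity of the local observables on the state propagates along an
edge of the graph: if `S'_u ψ = S'_v ψ = ψ` and `X'_v Z'_v ψ = -Z'_v X'_v ψ`, then
`X'_u Z'_u ψ = -Z'_u X'_u ψ`. -/
theorem anticommute_propagates {V : Type*} [Fintype V] [DecidableEq V]
    {H : Type*} [NormedAddCommGroup H] [InnerProductSpace ℂ H] [CompleteSpace H]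
    (G : SimpleGraph V) [DecidableRel G.Adj]
    (X' Z' : V → (H →L[ℂ] H))
    (hXsa : ∀ w, IsSelfAdjoint (X' w)) (hZsa : ∀ w, IsSelfAdjoint (Z' w))
    (hX2 : ∀ w, X' w * X' w = 1) (hZ2 : ∀ w, Z' w * Z' w = 1)
    (hXX : ∀ a b, a ≠ b → Commute (X' a) (X' b))
    (hXZ : ∀ a b, a ≠ b → Commute (X' a) (Z' b))
    (hZZ : ∀ a b, a ≠ b → Commute (Z' a) (Z' b))
    (u v : V) (huv : G.Adj u v) (ψ : H) (hψ : ‖ψ‖ = 1)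
    (hSu : (X' u * (G.neighborFinset u).noncommProd Z'
      (fun a _ b _ hab => hZZ a b hab)) ψ = ψ)
    (hSv : (X' v * (G.neighborFinset v).noncommProd Z'
      (fun a _ b _ hab => hZZ a b hab)) ψ = ψ)
    (hv : (X' v * Z' v) ψ = -((Z' v * X' v) ψ)) :
    (X' u * Z' u) ψ = -((Z' u * X' u) ψ) := by
  have hvu : v ∈ G.neighborFinset u := by simpa using huv
  have huvm : u ∈ G.neighborFinset v := by simpa using huv.symm
  set r : H →L[ℂ] H := ((G.neighborFinset u).erase v).noncommProd Z'
    (fun a _ b _ hab => hZZ a b hab) with hrdef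
  set q : H →L[ℂ] H := ((G.neighborFinset v).erase u).noncommProd Z'
    (fun a _ b _ hab => hZZ a b hab) with hqdef
  have hPu : Z' v * r = (G.neighborFinset u).noncommProd Z'
      (fun a _ b _ hab => hZZ a b hab) :=
    Finset.mul_noncommProd_erase _ hvu Z' _ _
  have hPv : Z' u * q = (G.neighborFinset v).noncommProd Z'
      (fun a _ b _ hab => hZZ a b hab) :=
    Finset.mul_noncommProd_erase _ huvm Z' _ _
  rw [← hPu] at hSu
  rw [← hPv] at hSv
  -- membership facts
  have hmr : ∀ x ∈ (G.neighborFinset u).erase v, x ≠ u ∧ x ≠ v := by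
    intro x hx
    have h1 := Finset.mem_of_mem_erase hx
    rw [SimpleGraph.mem_neighborFinset] at h1
    exact ⟨h1.ne', Finset.ne_of_mem_erase hx⟩
  have hmq : ∀ x ∈ (G.neighborFinset v).erase u, x ≠ u ∧ x ≠ v := by
    intro x hx
    have h1 := Finset.mem_of_mem_erase hx
    rw [SimpleGraph.mem_neighborFinset] at h1
    exact ⟨Finset.ne_of_mem_erase hx, h1.ne'⟩
  -- commutation facts
  have car : Commute (X' u) r :=
    Finset.noncommProd_commute _ _ _ _ fun x hx => hXZ u x (hmr x hx).1.symm
  have cbr : Commute (Z' u) r :=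
    Finset.noncommProd_commute _ _ _ _ fun x hx => hZZ u x (hmr x hx).1.symm
  have ccr : Commute (X' v) r :=
    Finset.noncommProd_commute _ _ _ _ fun x hx => hXZ v x (hmr x hx).2.symm
  have cdr : Commute (Z' v) r :=
    Finset.noncommProd_commute _ _ _ _ fun x hx => hZZ v x (hmr x hx).2.symm
  have caq : Commute (X' u) q :=
    Finset.noncommProd_commute _ _ _ _ fun x hx => hXZ u x (hmq x hx).1.symm
  have cbq : Commute (Z' u) q :=
    Finset.noncommProd_commute _ _ _ _ fun x hx => hZZ u x (hmq x hx).1.symm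
  have ccq : Commute (X' v) q :=
    Finset.noncommProd_commute _ _ _ _ fun x hx => hXZ v x (hmq x hx).2.symm
  have cdq : Commute (Z' v) q :=
    Finset.noncommProd_commute _ _ _ _ fun x hx => hZZ v x (hmq x hx).2.symm
  have cqr : Commute q r :=
    Finset.noncommProd_commute _ _ _ _ fun x hx =>
      (Finset.noncommProd_commute _ _ _ _ fun y hy => by
        rcases eq_or_ne x y with h | h
        · subst h; exact Commute.refl _
        · exact hZZ x y h).symm
  have cca : Commute (X' v) (X' u) := hXX v u huv.ne'
  have ccb : Commute (X' v) (Z' u) := hXZ v u huv.ne'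
  have cda : Commute (Z' v) (X' u) := (hXZ u v huv.ne).symm
  have cdb : Commute (Z' v) (Z' u) := hZZ v u huv.ne'
  -- squares
  have hr2 : r * r = 1 := noncommProd_sq_one _ _ _ (fun x _ => hZ2 x)
  have hq2 : q * q = 1 := noncommProd_sq_one _ _ _ (fun x _ => hZ2 x)
  -- applied helpers
  have sw : ∀ {f g : H →L[ℂ] H}, Commute f g → ∀ x : H, f (g x) = g (f x) := by
    intro f g h x
    conv_lhs => rw [← ContinuousLinearMap.mul_apply, h.eq, ContinuousLinearMap.mul_apply]
  have canc : ∀ {f : H →L[ℂ] H}, f * f = 1 → ∀ {x y : H}, f x = f y → x = y := by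
    intro f hf x y hxy
    have h2 : ∀ z : H, f (f z) = z := by
      intro z
      conv_lhs => rw [← ContinuousLinearMap.mul_apply, hf]
      simp
    have := congrArg f hxy
    rwa [h2, h2] at this
  simp only [ContinuousLinearMap.mul_apply] at hSu hSv hv ⊢
  have hv2 : Z' v (X' v ψ) = -(X' v (Z' v ψ)) := by rw [hv, neg_neg]
  have E1 : X' u (Z' v (r (X' v (Z' u (q ψ))))) = ψ := by rw [hSv]; exact hSu
  have E2 : X' v (Z' u (q (X' u (Z' v (r ψ))))) = ψ := by rw [hSu]; exact hSv
  simp only [sw car, sw cbr, sw ccr, sw cdr, sw caq, sw cbq, sw ccq, sw cdq, sw cqr,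
    sw cca, sw ccb, sw cda, sw cdb, hv2, map_neg] at E1 E2
  -- E1 : -(r (q (X' u (Z' u (X' v (Z' v ψ)))))) = ψ
  -- E2 : r (q (Z' u (X' u (X' v (Z' v ψ))))) = ψ
  have h3 : r (q (X' u (Z' u (X' v (Z' v ψ))))) =
      r (q (-(Z' u (X' u (X' v (Z' v ψ)))))) := by
    rw [neg_eq_iff_eq_neg.mp E1, map_neg, map_neg, E2]
  have key := canc hq2 (canc hr2 h3)
  simp only [← sw cca, ← sw ccb, ← sw cda, ← sw cdb, map_neg] at key
  -- key : X' v (Z' v (X' u (Z' u ψ))) = -(X' v (Z' v (Z' u (X' u ψ))))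
  have h4 : X' v (Z' v (X' u (Z' u ψ))) = X' v (Z' v (-(Z' u (X' u ψ)))) := by
    rw [key, map_neg, map_neg]
  exact canc (hZ2 v) (canc (hX2 v) h4)
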